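/- arXiv:2103.05182 — 3 statements merged into one kernel-verified Lean document; each statement's English description precedes it below -/
import Mathlib

section
/- Let μ be a Borel probability measure on [0,∞) with ∫ log(1+x) dμ(x) < ∞, and set p := 1 − μ({0}). If c ∈ (0,1] and c ≤ p (critical or subcritical cases), then [μ]_c = (B(c)/B(c/p)) · [μ⁺]_{c/p}. -/
open MeasureTheory Filter Topology
open scoped ENNReal

noncomputable def elogr (t : ℝ) : EReal := if t ≤ 0 then ⊥ else ((Real.log t : ℝ) : EReal)

/-- The Halász–Székely kernel, with values in `[-∞, +∞)` (`EReal`). -/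
noncomputable def hsKernel (c x y : ℝ) : EReal :=
  if c = 0 then ((Real.log y + y⁻¹ * x - 1 : ℝ) : EReal)
  else ((Real.log y : ℝ) : EReal) + ((c⁻¹ : ℝ) : EReal) * elogr (c * y⁻¹ * x + 1 - c)

/-- The nonnegative part of an extended real, as an element of `[0,∞]`. -/
noncomputable def erealToENNReal (x : EReal) : ℝ≥0∞ :=
  if x = ⊤ then ⊤ else ENNReal.ofReal x.toReal

/-- Integral of an `EReal`-valued function: positive part minus negative part. -/
noncomputable def eIntegral (μ : Measure ℝ) (f : ℝ → EReal) : EReal :=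
  ((∫⁻ x, erealToENNReal (f x) ∂μ : ℝ≥0∞) : EReal) - ((∫⁻ x, erealToENNReal (-f x) ∂μ : ℝ≥0∞) : EReal)

/-- Exponential on `EReal`, with values in `[0,∞]`. -/
noncomputable def eexp (x : EReal) : ℝ≥0∞ :=
  if x = ⊤ then ⊤ else if x = ⊥ then 0 else ENNReal.ofReal (Real.exp x.toReal)

/-- The Halász–Székely barycenter `[μ]_c ∈ [0,∞]`. -/
noncomputable def hsBary (c : ℝ) (μ : Measure ℝ) : ℝ≥0∞ :=
  eexp (⨅ y : {y : ℝ // 0 < y}, eIntegral μ (fun x => hsKernel c x y))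

/-- The function `B`. -/
noncomputable def hsB (c : ℝ) : ℝ :=
  if c = 0 then 0 else if c = 1 then 1 else c * (1 - c) ^ ((1 - c) / c)

/-- The uniform probability measure on the entries of a tuple. -/
noncomputable def unifMeasure {n : ℕ} (x : Fin n → ℝ) : Measure ℝ :=
  (n : ℝ≥0∞)⁻¹ • ∑ i, MeasureTheory.Measure.dirac (x i)

/-- The Halász–Székely mean of a tuple. -/
noncomputable def hsMean (c : ℝ) {n : ℕ} (x : Fin n → ℝ) : ℝ≥0∞ := hsBary c (unifMeasure x)

/-- The `k`-th symmetric mean of an `n`-tuple. -/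
noncomputable def symMean {n : ℕ} (k : ℕ) (x : Fin n → ℝ) : ℝ :=
  ((∑ s ∈ Finset.univ.powersetCard k, ∏ i ∈ s, x i) / (n.choose k)) ^ ((k : ℝ)⁻¹)

-- basic lemmas
lemma erealToENNReal_coe (r : ℝ) : erealToENNReal (r : EReal) = ENNReal.ofReal r := by
  simp [erealToENNReal]

lemma eexp_coe (r : ℝ) : eexp (r : EReal) = ENNReal.ofReal (Real.exp r) := by
  simp [eexp]

lemma eexp_bot : eexp ⊥ = 0 := by simp [eexp]

lemma eexp_coe_add (d : ℝ) (x : EReal) :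
    eexp ((d : EReal) + x) = ENNReal.ofReal (Real.exp d) * eexp x := by
  induction x using EReal.rec with
  | bot => simp [eexp]
  | top =>
      have : (d : EReal) + ⊤ = ⊤ := by simp
      rw [this]
      simp only [eexp, if_pos rfl, if_true]
      rw [ENNReal.mul_top (by simp [ENNReal.ofReal_eq_zero, not_le.2 (Real.exp_pos d)])]
  | coe r =>
      rw [← EReal.coe_add, eexp_coe, eexp_coe, Real.exp_add, ENNReal.ofReal_mul (Real.exp_pos d).le]

lemma eIntegral_congr_ae {μ : Measure ℝ} {f g : ℝ → EReal} (h : f =ᵐ[μ] g) :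
    eIntegral μ f = eIntegral μ g := by
  unfold eIntegral
  rw [lintegral_congr_ae (μ := μ) (f := fun x => erealToENNReal (f x))
      (g := fun x => erealToENNReal (g x)) (h.mono fun x hx => by simp only [hx]),
    lintegral_congr_ae (μ := μ) (f := fun x => erealToENNReal (-f x))
      (g := fun x => erealToENNReal (-g x)) (h.mono fun x hx => by simp only [hx])]

lemma eIntegral_coe {μ : Measure ℝ} {g : ℝ → ℝ} (hg : Integrable g μ) :
    eIntegral μ (fun x => (g x : EReal)) = ((∫ x, g x ∂μ : ℝ) : EReal) := by
  unfold eIntegral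
  have h1 : ∀ x, erealToENNReal ((g x : EReal)) = ENNReal.ofReal (g x) := fun x =>
    erealToENNReal_coe _
  have h2 : ∀ x, erealToENNReal (-(g x : EReal)) = ENNReal.ofReal (-g x) := fun x => by
    rw [← EReal.coe_neg, erealToENNReal_coe]
  simp only [h1, h2]
  have hp : (∫⁻ x, ENNReal.ofReal (g x) ∂μ) ≠ ⊤ := hg.lintegral_lt_top.ne
  have hn : (∫⁻ x, ENNReal.ofReal (-g x) ∂μ) ≠ ⊤ := hg.neg.lintegral_lt_top.ne
  rw [integral_eq_lintegral_pos_part_sub_lintegral_neg_part hg, EReal.coe_sub,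
    ← ENNReal.ofReal_toReal hp, ← ENNReal.ofReal_toReal hn]
  rw [EReal.coe_ennreal_ofReal, EReal.coe_ennreal_ofReal,
    max_eq_left ENNReal.toReal_nonneg, max_eq_left ENNReal.toReal_nonneg,
    ENNReal.ofReal_toReal hp, ENNReal.ofReal_toReal hn]

lemma iInf_coe_add {ι : Sort*} [Nonempty ι] (d : ℝ) (f : ι → EReal) :
    (⨅ i, ((d : EReal) + f i)) = (d : EReal) + ⨅ i, f i := by
  apply le_antisymm
  · have h : (⨅ i, ((d : EReal) + f i)) - (d : EReal) ≤ ⨅ i, f i :=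
      le_iInf fun i => EReal.sub_le_of_le_add' (iInf_le _ i)
    calc (⨅ i, ((d : EReal) + f i)) = (⨅ i, ((d : EReal) + f i)) - (d : EReal) + (d : EReal) :=
          EReal.sub_add_cancel.symm
      _ ≤ (⨅ i, f i) + (d : EReal) := add_le_add_left h _
      _ = (d : EReal) + ⨅ i, f i := add_comm _ _
  · exact le_iInf fun i => add_le_add_right (iInf_le _ i) _

lemma iInf_pos_scale (k : ℝ) (hk : 0 < k) (G : {y : ℝ // 0 < y} → EReal) :
    (⨅ y : {y : ℝ // 0 < y}, G ⟨k * y.1, mul_pos hk y.2⟩) = ⨅ y, G y := by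
  apply le_antisymm
  · exact le_iInf fun z => by
      refine iInf_le_of_le ⟨k⁻¹ * z.1, mul_pos (inv_pos.2 hk) z.2⟩ (le_of_eq ?_)
      congr 1
      ext
      field_simp
  · exact le_iInf fun y => iInf_le _ _

lemma hsB_pos {c : ℝ} (h0 : 0 < c) (h1 : c ≤ 1) : 0 < hsB c := by
  unfold hsB
  rw [if_neg h0.ne']
  rcases eq_or_lt_of_le h1 with h | h
  · rw [if_pos h]; norm_num
  · rw [if_neg h.ne]
    exact mul_pos h0 (Real.rpow_pos_of_pos (by linarith) _)

noncomputable def Kr (c y x : ℝ) : ℝ := Real.log y + c⁻¹ * Real.log (c * y⁻¹ * x + 1 - c)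

lemma measurable_Kr (c y : ℝ) : Measurable (Kr c y) := by
  unfold Kr
  exact measurable_const.add (measurable_const.mul
    (Real.measurable_log.comp (((measurable_id.const_mul _).add_const _).sub_const _)))

lemma integrable_log_affine {ν : Measure ℝ} [IsFiniteMeasure ν] (hx : ∀ᵐ x ∂ν, 0 ≤ x)
    (hint : Integrable (fun x => Real.log (1 + x)) ν) {a b : ℝ} (ha : 0 ≤ a) (hb : 0 < b) :
    Integrable (fun x => Real.log (a * x + b)) ν := by
  set M := max a b with hM
  have hMpos : 0 < M := lt_of_lt_of_le hb (le_max_right a b)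
  have hbound : Integrable (fun x => |Real.log b| + |Real.log M| + Real.log (1 + x)) ν :=
    (integrable_const _).add hint
  refine hbound.mono' ((Real.measurable_log.comp
    ((measurable_id.const_mul _).add_const _)).aestronglyMeasurable) ?_
  filter_upwards [hx] with x hx0
  have harg : b ≤ a * x + b := by nlinarith
  have hargpos : 0 < a * x + b := lt_of_lt_of_le hb harg
  have h1x : (0:ℝ) ≤ Real.log (1 + x) := Real.log_nonneg (by linarith)
  rw [Real.norm_eq_abs, abs_le]
  constructor
  · have : Real.log b ≤ Real.log (a * x + b) := Real.log_le_log hb harg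
    have := abs_nonneg (Real.log M)
    have := neg_abs_le (Real.log b)
    linarith
  · have hle : a * x + b ≤ M * (1 + x) := by
      have h1 : a ≤ M := le_max_left a b
      have h2 : b ≤ M := le_max_right a b
      nlinarith
    have : Real.log (a * x + b) ≤ Real.log (M * (1 + x)) := Real.log_le_log hargpos hle
    rw [Real.log_mul hMpos.ne' (by linarith)] at this
    have := le_abs_self (Real.log M)
    have := abs_nonneg (Real.log b)
    linarith

lemma integrable_Kr {ν : Measure ℝ} [IsFiniteMeasure ν] (hx : ∀ᵐ x ∂ν, 0 ≤ x)
    (hint : Integrable (fun x => Real.log (1 + x)) ν) {c y : ℝ} (hc0 : 0 < c) (hc1 : c < 1)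
    (hy : 0 < y) : Integrable (Kr c y) ν := by
  have h := (integrable_log_affine hx hint (a := c * y⁻¹) (b := 1 - c)
    (by positivity) (by linarith)).const_mul c⁻¹
  have heq : (fun x => c⁻¹ * Real.log (c * y⁻¹ * x + (1 - c))) = fun x =>
      c⁻¹ * Real.log (c * y⁻¹ * x + 1 - c) := by
    funext x; ring_nf
  unfold Kr
  exact (integrable_const (Real.log y)).add (by rw [← heq]; exact h)

lemma integral_split (μ : Measure ℝ) [IsProbabilityMeasure μ] (hsupp : μ (Set.Iio 0) = 0)
    (hne : μ (Set.Ioi 0) ≠ 0) {g : ℝ → ℝ} (hg : Integrable g μ) :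
    ∫ x, g x ∂μ = (μ {0}).toReal * g 0
      + (μ (Set.Ioi 0)).toReal * ∫ x, g x ∂((μ (Set.Ioi 0))⁻¹ • μ.restrict (Set.Ioi 0)) := by
  have hae : ∀ᵐ x ∂μ, x ∈ Set.Ici (0:ℝ) := by
    rw [ae_iff]
    convert hsupp using 2
    ext x; simp [not_le]
  have hres : μ.restrict (Set.Ici 0) = μ := Measure.restrict_eq_self_of_ae_mem hae
  have hsplit : μ = μ.restrict {0} + μ.restrict (Set.Ioi 0) := by
    rw [← Measure.restrict_union (Set.disjoint_singleton_left.2 (by simp))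
      (measurableSet_Ioi : MeasurableSet (Set.Ioi (0:ℝ))), Set.singleton_union, Set.Ioi_insert,
      hres]
  have hfin : μ (Set.Ioi 0) ≠ ⊤ := (measure_lt_top μ _).ne
  have hresm : μ.restrict (Set.Ioi 0) =
      (μ (Set.Ioi 0)) • ((μ (Set.Ioi 0))⁻¹ • μ.restrict (Set.Ioi 0)) := by
    rw [smul_smul, ENNReal.mul_inv_cancel hne hfin, one_smul]
  calc ∫ x, g x ∂μ = ∫ x, g x ∂(μ.restrict {0} + μ.restrict (Set.Ioi 0)) := by rw [← hsplit]
    _ = ∫ x, g x ∂(μ.restrict {0}) + ∫ x, g x ∂(μ.restrict (Set.Ioi 0)) :=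
        integral_add_measure (hg.restrict) (hg.restrict)
    _ = (μ {0}).toReal * g 0 + (μ (Set.Ioi 0)).toReal
          * ∫ x, g x ∂((μ (Set.Ioi 0))⁻¹ • μ.restrict (Set.Ioi 0)) := by
        rw [Measure.restrict_singleton, integral_smul_measure, integral_dirac,
          hresm, integral_smul_measure]
        simp only [smul_eq_mul]
        rw [smul_smul, ENNReal.inv_mul_cancel hne hfin, one_smul]

lemma hsKernel_coe {c y x : ℝ} (hc0 : 0 < c) (hc1 : c < 1) (hy : 0 < y) (hx : 0 ≤ x) :
    hsKernel c x y = ((Kr c y x : ℝ) : EReal) := by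
  have harg : 0 < c * y⁻¹ * x + 1 - c := by
    have : 0 ≤ c * y⁻¹ * x := by positivity
    linarith
  rw [hsKernel, if_neg hc0.ne', elogr, if_neg (not_le.2 harg), Kr,
    ← EReal.coe_mul, ← EReal.coe_add]

lemma eIntegral_hsKernel {μ : Measure ℝ} [IsFiniteMeasure μ] (hx : ∀ᵐ x ∂μ, 0 ≤ x)
    (hint : Integrable (fun x => Real.log (1 + x)) μ) {c y : ℝ} (hc0 : 0 < c) (hc1 : c < 1)
    (hy : 0 < y) :
    eIntegral μ (fun x => hsKernel c x y) = ((∫ x, Kr c y x ∂μ : ℝ) : EReal) := by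
  rw [eIntegral_congr_ae (g := fun x => ((Kr c y x : ℝ) : EReal))
    (hx.mono fun x h => hsKernel_coe hc0 hc1 hy h)]
  exact eIntegral_coe (integrable_Kr hx hint hc0 hc1 hy)
lemma kernel_identity {c p x y : ℝ} (hc : 0 < c) (hcp : c < p) (hp1 : p ≤ 1)
    (hx : 0 < x) (hy : 0 < y) :
    (1 - p) * Kr c y 0 + p * Kr c y x
      = Real.log (hsB c / hsB (c / p))
        + Kr (c / p) ((1 - c) / (p * (1 - c / p)) * y) x := by
  have hp : 0 < p := hc.trans hcp
  have hc1 : c < 1 := lt_of_lt_of_le hcp hp1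
  set c' : ℝ := c / p with hc'def
  have hc'0 : 0 < c' := div_pos hc hp
  have hc'1 : c' < 1 := (div_lt_one hp).2 hcp
  set k : ℝ := (1 - c) / (p * (1 - c')) with hkdef
  have h1c : (0:ℝ) < 1 - c := by linarith
  have h1c' : (0:ℝ) < 1 - c' := by linarith
  have hk : 0 < k := div_pos h1c (mul_pos hp h1c')
  set T : ℝ := 1 + c * x / ((1 - c) * y) with hTdef
  have hT : 0 < T := by
    have : 0 < c * x / ((1 - c) * y) := by positivity
    rw [hTdef]; linarith
  -- rewrite Kr c y 0
  have e0 : Kr c y 0 = Real.log y + c⁻¹ * Real.log (1 - c) := by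
    unfold Kr; norm_num
  -- rewrite Kr c y x
  have e1 : Kr c y x = Real.log y + c⁻¹ * (Real.log (1 - c) + Real.log T) := by
    unfold Kr
    have harg : c * y⁻¹ * x + 1 - c = (1 - c) * T := by
      rw [hTdef]; field_simp; ring
    rw [harg, Real.log_mul h1c.ne' hT.ne']
  -- rewrite Kr c' (k*y) x
  have e2 : Kr c' (k * y) x = Real.log k + Real.log y + c'⁻¹ * (Real.log (1 - c') + Real.log T) := by
    unfold Kr
    have harg : c' * (k * y)⁻¹ * x + 1 - c' = (1 - c') * T := by
      rw [hTdef, hkdef, hc'def]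
      field_simp
      ring
    rw [harg, Real.log_mul h1c'.ne' hT.ne', Real.log_mul hk.ne' hy.ne']
  have e3 : Real.log k = Real.log (1 - c) - (Real.log p + Real.log (1 - c')) := by
    rw [hkdef, Real.log_div h1c.ne' (mul_pos hp h1c').ne', Real.log_mul hp.ne' h1c'.ne']
  have e4 : Real.log (hsB c / hsB c')
      = (Real.log c + (1 - c) / c * Real.log (1 - c))
        - (Real.log c' + (1 - c') / c' * Real.log (1 - c')) := by
    rw [Real.log_div (hsB_pos hc hc1.le).ne' (hsB_pos hc'0 hc'1.le).ne']
    unfold hsB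
    rw [if_neg hc.ne', if_neg hc1.ne, if_neg hc'0.ne', if_neg hc'1.ne,
      Real.log_mul hc.ne' (Real.rpow_pos_of_pos h1c _).ne',
      Real.log_mul hc'0.ne' (Real.rpow_pos_of_pos h1c' _).ne',
      Real.log_rpow h1c, Real.log_rpow h1c']
  have e5 : Real.log c' = Real.log c - Real.log p := Real.log_div hc.ne' hp.ne'
  have e6 : c'⁻¹ = p / c := by rw [hc'def, inv_div]
  rw [e0, e1, e2, e3, e4, e5, e6, hc'def]
  field_simp
  ring

lemma kernel_identity_crit {c x y : ℝ} (hc : 0 < c) (hc1 : c < 1) (hx : 0 < x) (hy : 0 < y) :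
    (1 - c) * Kr c y 0 + c * Kr c y x
      = (Real.log (hsB c) - Real.log c) + Real.log (c * x + (1 - c) * y) := by
  have h1c : (0:ℝ) < 1 - c := by linarith
  have e0 : Kr c y 0 = Real.log y + c⁻¹ * Real.log (1 - c) := by
    unfold Kr; norm_num
  have hpos : 0 < c * x + (1 - c) * y := by positivity
  have e1 : Kr c y x = Real.log y + c⁻¹ * (Real.log (c * x + (1 - c) * y) - Real.log y) := by
    unfold Kr
    have harg : c * y⁻¹ * x + 1 - c = (c * x + (1 - c) * y) / y := by
      field_simp; ring
    rw [harg, Real.log_div hpos.ne' hy.ne']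
  have e4 : Real.log (hsB c) = Real.log c + (1 - c) / c * Real.log (1 - c) := by
    unfold hsB
    rw [if_neg hc.ne', if_neg hc1.ne,
      Real.log_mul hc.ne' (Real.rpow_pos_of_pos h1c _).ne', Real.log_rpow h1c]
  rw [e0, e1, e4]
  field_simp
  ring
lemma iInf_H (ν : Measure ℝ) [IsProbabilityMeasure ν] (hpos : ∀ᵐ x ∂ν, 0 < x)
    (hint : Integrable (fun x => Real.log (1 + x)) ν) {c : ℝ} (hc0 : 0 < c) (hc1 : c < 1) :
    (⨅ y : {y : ℝ // 0 < y}, ((∫ x, Real.log (c * x + (1 - c) * y.1) ∂ν : ℝ) : EReal))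
      = ((Real.log c : ℝ) : EReal) + eIntegral ν (fun x => ((Real.log x : ℝ) : EReal)) := by
  have hae0 : ∀ᵐ x ∂ν, (0:ℝ) ≤ x := hpos.mono fun x h => h.le
  have h1c : (0:ℝ) < 1 - c := by linarith
  have h_int : ∀ y : ℝ, 0 < y → Integrable (fun x => Real.log (c * x + (1 - c) * y)) ν :=
    fun y hy => integrable_log_affine hae0 hint hc0.le (by positivity)
  have hL : eIntegral ν (fun x => ((Real.log x : ℝ) : EReal))
      = ((∫⁻ x, ENNReal.ofReal (Real.log x) ∂ν : ℝ≥0∞) : EReal)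
        - ((∫⁻ x, ENNReal.ofReal (-Real.log x) ∂ν : ℝ≥0∞) : EReal) := by
    unfold eIntegral
    have e1 : (fun x : ℝ => erealToENNReal ((Real.log x : ℝ) : EReal))
        = fun x => ENNReal.ofReal (Real.log x) := by
      funext x; rw [erealToENNReal_coe]
    have e2 : (fun x : ℝ => erealToENNReal (-((Real.log x : ℝ) : EReal)))
        = fun x => ENNReal.ofReal (-Real.log x) := by
      funext x; rw [← EReal.coe_neg, erealToENNReal_coe]
    rw [e1, e2]
  set yn : ℕ → ℝ := fun n => 1 / ((n : ℝ) + 1) with hyn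
  have hynpos : ∀ n, 0 < yn n := fun n => by positivity
  have hynle : ∀ n, yn n ≤ 1 := fun n => by
    rw [hyn]
    rw [div_le_one (by positivity)]
    simp
  have hyntend : Filter.Tendsto yn atTop (𝓝 0) := tendsto_one_div_add_atTop_nhds_zero_nat
  by_cases hN : (∫⁻ x, ENNReal.ofReal (-Real.log x) ∂ν) = ⊤
  · -- negative part infinite: both sides are ⊥
    have hRHS : eIntegral ν (fun x => ((Real.log x : ℝ) : EReal)) = ⊥ := by
      rw [hL, hN, EReal.coe_ennreal_top, EReal.sub_top]
    rw [hRHS, EReal.add_bot]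
    -- the sup of negative-part lintegrals is ⊤
    set f : ℕ → ℝ → ℝ≥0∞ := fun n x => ENNReal.ofReal (-Real.log (c * x + (1 - c) * yn n))
      with hf
    have hfmeas : ∀ n, AEMeasurable (f n) ν := fun n =>
      (ENNReal.measurable_ofReal.comp ((Real.measurable_log.comp
        ((measurable_id.const_mul c).add_const _)).neg)).aemeasurable
    have hargpos : ∀ (x : ℝ), 0 < x → ∀ (n : ℕ), 0 < c * x + (1 - c) * yn n := fun x hx n => by
      have := hynpos n; positivity
    have hmono : ∀ᵐ x ∂ν, Monotone fun n => f n x := by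
      filter_upwards [hpos] with x hx
      intro m n hmn
      have harg : c * x + (1 - c) * yn n ≤ c * x + (1 - c) * yn m := by
        have : yn n ≤ yn m := by
          rw [hyn]
          apply one_div_le_one_div_of_le (by positivity)
          exact_mod_cast add_le_add_left (Nat.cast_le.2 hmn) 1
        nlinarith
      exact ENNReal.ofReal_le_ofReal (neg_le_neg (Real.log_le_log (hargpos x hx n) harg))
    have hUP : (∫⁻ x, ENNReal.ofReal (-Real.log (c * x)) ∂ν) = ⊤ := by
      by_contra hne
      have hconst : (∫⁻ _, ENNReal.ofReal (Real.log c) ∂ν) = ENNReal.ofReal (Real.log c) := by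
        rw [lintegral_const, measure_univ, mul_one]
      have hle : (∫⁻ x, ENNReal.ofReal (-Real.log x) ∂ν)
          ≤ (∫⁻ x, ENNReal.ofReal (-Real.log (c * x)) ∂ν) + ENNReal.ofReal (Real.log c) := by
        rw [← hconst, ← lintegral_add_right _ measurable_const]
        refine lintegral_mono_ae ?_
        filter_upwards [hpos] with x hx
        have : -Real.log x = -Real.log (c * x) + Real.log c := by
          rw [Real.log_mul hc0.ne' hx.ne']; ring
        rw [this]
        exact ENNReal.ofReal_add_le
      rw [hN] at hle
      exact (ENNReal.add_ne_top.2 ⟨hne, ENNReal.ofReal_ne_top⟩) (top_le_iff.1 hle)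
    have hsup : (⨆ n, ∫⁻ x, f n x ∂ν) = ⊤ := by
      rw [← lintegral_iSup' hfmeas hmono]
      rw [← top_le_iff, ← hUP]
      refine lintegral_mono_ae ?_
      filter_upwards [hpos] with x hx
      have htendf : Filter.Tendsto (fun n => f n x) atTop
          (𝓝 (ENNReal.ofReal (-Real.log (c * x)))) := by
        apply ENNReal.tendsto_ofReal
        have harg : Filter.Tendsto (fun n => c * x + (1 - c) * yn n) atTop (𝓝 (c * x)) := by
          have := (hyntend.const_mul (1 - c)).const_add (c * x)
          simpa [hyn, one_div] using this
        exact (((Real.continuousAt_log (by positivity : (0:ℝ) < c * x).ne').tendsto).comp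
          harg).neg
      exact le_of_tendsto htendf (Filter.Eventually.of_forall fun n => le_iSup (fun n => f n x) n)
    -- P 1 bound
    have hP1fin : (∫⁻ x, ENNReal.ofReal (Real.log (c * x + (1 - c))) ∂ν) ≠ ⊤ := by
      refine (lt_of_le_of_lt ?_ hint.lintegral_lt_top).ne
      refine lintegral_mono_ae ?_
      filter_upwards [hpos] with x hx
      refine ENNReal.ofReal_le_ofReal (Real.log_le_log (by positivity) (by nlinarith))
    -- conclude iInf = ⊥
    have hsuff : ∀ b : ℝ, ∃ y : {y : ℝ // 0 < y},
        (∫ x, Real.log (c * x + (1 - c) * y.1) ∂ν) < b := by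
      intro b
      set P1 := (∫⁻ x, ENNReal.ofReal (Real.log (c * x + (1 - c))) ∂ν) with hP1
      have hM : P1 + ENNReal.ofReal (1 + |b|) ≠ ⊤ :=
        ENNReal.add_ne_top.2 ⟨hP1fin, ENNReal.ofReal_ne_top⟩
      obtain ⟨n, hn⟩ := lt_iSup_iff.1 (hsup ▸ lt_top_iff_ne_top.2 hM :
        P1 + ENNReal.ofReal (1 + |b|) < ⨆ n, ∫⁻ x, f n x ∂ν)
      refine ⟨⟨yn n, hynpos n⟩, ?_⟩
      have hintn := h_int (yn n) (hynpos n)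
      rw [integral_eq_lintegral_pos_part_sub_lintegral_neg_part hintn]
      have hNn : (∫⁻ x, ENNReal.ofReal (-Real.log (c * x + (1 - c) * yn n)) ∂ν) ≠ ⊤ :=
        hintn.neg.lintegral_lt_top.ne
      have hPle : (∫⁻ x, ENNReal.ofReal (Real.log (c * x + (1 - c) * yn n)) ∂ν) ≤ P1 := by
        refine lintegral_mono_ae ?_
        filter_upwards [hpos] with x hx
        refine ENNReal.ofReal_le_ofReal (Real.log_le_log (hargpos x hx n) ?_)
        have := hynle n
        nlinarith
      have h1 : (∫⁻ x, ENNReal.ofReal (Real.log (c * x + (1 - c) * yn n)) ∂ν).toReal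
          ≤ P1.toReal := ENNReal.toReal_mono hP1fin hPle
      have h2 : P1.toReal + (1 + |b|)
          ≤ (∫⁻ x, ENNReal.ofReal (-Real.log (c * x + (1 - c) * yn n)) ∂ν).toReal := by
        have := ENNReal.toReal_mono hNn hn.le
        rwa [ENNReal.toReal_add hP1fin ENNReal.ofReal_ne_top,
          ENNReal.toReal_ofReal (by positivity)] at this
      have hb : -|b| ≤ b := neg_abs_le b
      have : (fun x => -Real.log (c * x + (1 - c) * yn n))
          = fun x => -(Real.log (c * x + (1 - c) * yn n)) := rfl
      linarith [h1, h2]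
    rw [iInf_eq_bot]
    intro b hb
    induction b using EReal.rec with
    | bot => exact absurd hb (lt_irrefl _)
    | top => exact ⟨⟨1, one_pos⟩, EReal.coe_lt_top _⟩
    | coe r =>
        obtain ⟨y, hy⟩ := hsuff r
        exact ⟨y, EReal.coe_lt_coe_iff.2 hy⟩
  · -- negative part finite: log is integrable
    have hPfin : (∫⁻ x, ENNReal.ofReal (Real.log x) ∂ν) ≠ ⊤ := by
      refine (lt_of_le_of_lt ?_ hint.lintegral_lt_top).ne
      refine lintegral_mono_ae ?_
      filter_upwards [hpos] with x hx
      exact ENNReal.ofReal_le_ofReal (Real.log_le_log hx (by linarith))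
    have hlogint : Integrable (fun x => Real.log x) ν := by
      refine ⟨Real.measurable_log.aestronglyMeasurable, ?_⟩
      rw [hasFiniteIntegral_iff_norm]
      have hptw : ∀ x : ℝ, ENNReal.ofReal ‖Real.log x‖
          ≤ ENNReal.ofReal (Real.log x) + ENNReal.ofReal (-Real.log x) := fun x => by
        rcases le_total 0 (Real.log x) with h | h
        · rw [Real.norm_eq_abs, abs_of_nonneg h]; exact le_add_of_le_of_nonneg le_rfl zero_le
        · rw [Real.norm_eq_abs, abs_of_nonpos h]
          exact le_add_of_nonneg_of_le zero_le le_rfl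
      calc (∫⁻ x, ENNReal.ofReal ‖Real.log x‖ ∂ν)
          ≤ ∫⁻ x, (ENNReal.ofReal (Real.log x) + ENNReal.ofReal (-Real.log x)) ∂ν :=
            lintegral_mono hptw
        _ = (∫⁻ x, ENNReal.ofReal (Real.log x) ∂ν) + ∫⁻ x, ENNReal.ofReal (-Real.log x) ∂ν :=
            lintegral_add_left (ENNReal.measurable_ofReal.comp Real.measurable_log) _
        _ < ⊤ := ENNReal.add_lt_top.2 ⟨lt_top_iff_ne_top.2 hPfin, lt_top_iff_ne_top.2 hN⟩
    have hlogcx : Integrable (fun x => Real.log (c * x)) ν := by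
      refine ((integrable_const (Real.log c)).add hlogint).congr ?_
      filter_upwards [hpos] with x hx
      simp [Real.log_mul hc0.ne' hx.ne']
    have hJ : (∫ x, Real.log (c * x) ∂ν) = Real.log c + ∫ x, Real.log x ∂ν := by
      have hcongr : (∫ x, (Real.log c + Real.log x) ∂ν) = ∫ x, Real.log (c * x) ∂ν := by
        refine integral_congr_ae ?_
        filter_upwards [hpos] with x hx
        rw [Real.log_mul hc0.ne' hx.ne']
      rw [← hcongr, integral_add (integrable_const _) hlogint, integral_const, probReal_univ]
      simp
    have hlow : ∀ y : {y : ℝ // 0 < y},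
        (∫ x, Real.log (c * x) ∂ν) ≤ ∫ x, Real.log (c * x + (1 - c) * y.1) ∂ν := by
      intro y
      refine integral_mono_ae hlogcx (h_int y.1 y.2) ?_
      filter_upwards [hpos] with x hx
      refine Real.log_le_log (by positivity) ?_
      nlinarith [y.2]
    have hint1 : Integrable (fun x => Real.log (c * x + (1 - c))) ν := by
      simpa using h_int 1 one_pos
    have htendH : Filter.Tendsto (fun n => ∫ x, Real.log (c * x + (1 - c) * yn n) ∂ν) atTop
        (𝓝 (∫ x, Real.log (c * x) ∂ν)) := by
      refine tendsto_integral_of_dominated_convergence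
        (fun x => |Real.log (c * x)| + |Real.log (c * x + (1 - c))|)
        (fun n => (Real.measurable_log.comp
          ((measurable_id.const_mul c).add_const _)).aestronglyMeasurable)
        (hlogcx.abs.add hint1.abs) ?_ ?_
      · intro n
        filter_upwards [hpos] with x hx
        have hpos1 : 0 < c * x := by positivity
        have hpos2 : 0 < c * x + (1 - c) * yn n := by have := hynpos n; positivity
        have hlo : Real.log (c * x) ≤ Real.log (c * x + (1 - c) * yn n) :=
          Real.log_le_log hpos1 (by nlinarith [hynpos n])
        have hhi : Real.log (c * x + (1 - c) * yn n) ≤ Real.log (c * x + (1 - c)) :=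
          Real.log_le_log hpos2 (by nlinarith [hynle n])
        rw [Real.norm_eq_abs, abs_le]
        constructor
        · have := neg_abs_le (Real.log (c * x))
          have := abs_nonneg (Real.log (c * x + (1 - c)))
          linarith
        · have := le_abs_self (Real.log (c * x + (1 - c)))
          have := abs_nonneg (Real.log (c * x))
          linarith
      · filter_upwards [hpos] with x hx
        have harg : Filter.Tendsto (fun n => c * x + (1 - c) * yn n) atTop (𝓝 (c * x)) := by
          have := (hyntend.const_mul (1 - c)).const_add (c * x)
          simpa [hyn, one_div] using this
        exact ((Real.continuousAt_log (by positivity : (0:ℝ) < c * x).ne').tendsto).comp harg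
    have hIH : (⨅ y : {y : ℝ // 0 < y},
        ((∫ x, Real.log (c * x + (1 - c) * y.1) ∂ν : ℝ) : EReal))
          = ((∫ x, Real.log (c * x) ∂ν : ℝ) : EReal) := by
      apply le_antisymm
      · exact ge_of_tendsto (EReal.tendsto_coe.2 htendH)
          (Filter.Eventually.of_forall fun n => iInf_le (fun y : {y : ℝ // 0 < y} =>
            ((∫ x, Real.log (c * x + (1 - c) * y.1) ∂ν : ℝ) : EReal)) ⟨yn n, hynpos n⟩)
      · exact le_iInf fun y => EReal.coe_le_coe_iff.2 (hlow y)
    rw [hIH, hJ, eIntegral_coe hlogint, EReal.coe_add]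

/-- if `c ∈ (0,1]` and `c ≤ p := 1 - μ({0})`, then
`[μ]_c = (B(c)/B(c/p)) · [μ⁺]_{c/p}`. -/
theorem hsBary_induce (μ : Measure ℝ) [IsProbabilityMeasure μ]
    (hsupp : μ (Set.Iio 0) = 0) (hint : Integrable (fun x => Real.log (1 + x)) μ)
    (c : ℝ) (hc : c ∈ Set.Ioc (0 : ℝ) 1) (hcp : c ≤ 1 - (μ {0}).toReal) :
    hsBary c μ =
      ENNReal.ofReal (hsB c / hsB (c / (1 - (μ {0}).toReal))) *
        hsBary (c / (1 - (μ {0}).toReal)) ((μ (Set.Ioi 0))⁻¹ • μ.restrict (Set.Ioi 0)) := by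
  obtain ⟨hc0, hc1⟩ := hc
  have haeμ0 : ∀ᵐ x ∂μ, (0:ℝ) ≤ x := by
    rw [ae_iff]
    convert hsupp using 2
    ext x; simp [not_le]
  set t : ℝ := (μ {0}).toReal with ht
  set p : ℝ := 1 - t with hpdef
  have hp0 : 0 < p := lt_of_lt_of_le hc0 hcp
  have ht0 : 0 ≤ t := ENNReal.toReal_nonneg
  have hp1 : p ≤ 1 := by rw [hpdef]; linarith
  have hIic : μ (Set.Iic 0) = μ {0} := by
    apply le_antisymm
    · calc μ (Set.Iic 0) = μ (Set.Iio 0 ∪ {0}) := by rw [Set.Iio_union_right]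
        _ ≤ μ (Set.Iio 0) + μ {0} := measure_union_le _ _
        _ = μ {0} := by rw [hsupp, zero_add]
    · exact measure_mono (fun x hx => by simp at hx; simp [hx])
  have hIoi : μ (Set.Ioi 0) = 1 - μ {0} := by
    have h := measure_compl (measurableSet_Iic : MeasurableSet (Set.Iic (0:ℝ)))
      (measure_ne_top μ _)
    rw [Set.compl_Iic, measure_univ, hIic] at h
    exact h
  have hIoiReal : (μ (Set.Ioi 0)).toReal = p := by
    rw [hIoi, ENNReal.toReal_sub_of_le prob_le_one ENNReal.one_ne_top, ENNReal.toReal_one,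
      ← ht, hpdef]
  have hne : μ (Set.Ioi 0) ≠ 0 := by
    intro h
    rw [h, ENNReal.toReal_zero] at hIoiReal
    linarith
  have hfin : μ (Set.Ioi 0) ≠ ⊤ := measure_ne_top μ _
  set ν := (μ (Set.Ioi 0))⁻¹ • μ.restrict (Set.Ioi 0) with hν
  have hνprob : IsProbabilityMeasure ν := ⟨by
    rw [hν, Measure.smul_apply, Measure.restrict_apply_univ, smul_eq_mul,
      ENNReal.inv_mul_cancel hne hfin]⟩
  have hνpos : ∀ᵐ x ∂ν, (0:ℝ) < x := by
    rw [ae_iff]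
    have hset : {x : ℝ | ¬ 0 < x} = Set.Iic 0 := by ext x; simp [not_lt]
    have hempty : Set.Iic (0:ℝ) ∩ Set.Ioi 0 = ∅ := by
      ext x; simp only [Set.mem_inter_iff, Set.mem_Iic, Set.mem_Ioi, Set.mem_empty_iff_false,
        iff_false, not_and, not_lt]
      exact fun h => h
    rw [hset, hν, Measure.smul_apply, Measure.restrict_apply measurableSet_Iic, hempty,
      measure_empty, smul_eq_mul, mul_zero]
  have hνae0 : ∀ᵐ x ∂ν, (0:ℝ) ≤ x := hνpos.mono fun x h => h.le
  have hintν : Integrable (fun x => Real.log (1 + x)) ν := by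
    rw [hν]; exact (hint.restrict).smul_measure (ENNReal.inv_ne_top.2 hne)
  by_cases hμ0 : t = 0
  · -- case p = 1
    have hzero : μ {0} = 0 := by
      rcases (ENNReal.toReal_eq_zero_iff _).1 (ht ▸ hμ0 : (μ {0}).toReal = 0) with h | h
      · exact h
      · exact absurd h (measure_ne_top μ _)
    have hIic0 : μ (Set.Iic 0) = 0 := by rw [hIic, hzero]
    have hresμ : μ.restrict (Set.Ioi 0) = μ := by
      apply Measure.restrict_eq_self_of_ae_mem
      rw [ae_iff]
      convert hIic0 using 2
      ext x; simp [not_lt]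
    have hIoi1 : μ (Set.Ioi 0) = 1 := by rw [hIoi, hzero, tsub_zero]
    have hν1 : ν = μ := by rw [hν, hresμ, hIoi1, inv_one, one_smul]
    have hpone : p = 1 := by rw [hpdef, hμ0]; ring
    rw [hν1, hpone, div_one, div_self (hsB_pos hc0 hc1).ne', ENNReal.ofReal_one, one_mul]
  · -- case p < 1
    have ht0' : 0 < t := lt_of_le_of_ne ht0 (Ne.symm hμ0)
    have hplt1 : p < 1 := by rw [hpdef]; linarith
    have hc1' : c < 1 := lt_of_le_of_lt hcp hplt1
    have hEμ : ∀ y : {y : ℝ // 0 < y}, eIntegral μ (fun x => hsKernel c x y.1)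
        = ((∫ x, Kr c y.1 x ∂μ : ℝ) : EReal) := fun y =>
      eIntegral_hsKernel haeμ0 hint hc0 hc1' y.2
    have hsplit : ∀ y : ℝ, 0 < y → (∫ x, Kr c y x ∂μ)
        = (1 - p) * Kr c y 0 + p * ∫ x, Kr c y x ∂ν := by
      intro y hy
      have h := integral_split μ hsupp hne (integrable_Kr haeμ0 hint hc0 hc1' hy)
      rw [← ht, hIoiReal, ← hν] at h
      rw [h, hpdef]
      ring
    rcases eq_or_lt_of_le hcp with hcrit | hsub
    · -- critical case : c = p
      have hcp1 : c / p = 1 := by rw [← hcrit, div_self hc0.ne']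
      have hB1 : hsB (1:ℝ) = 1 := by unfold hsB; norm_num
      have hK1 : ∀ z : {y : ℝ // 0 < y}, eIntegral ν (fun x => hsKernel 1 x z.1)
          = eIntegral ν (fun x => ((Real.log x : ℝ) : EReal)) := by
        intro z
        refine eIntegral_congr_ae ?_
        filter_upwards [hνpos] with x hx
        have harg : (1:ℝ) * z.1⁻¹ * x + 1 - 1 = x / z.1 := by field_simp; ring
        rw [hsKernel, if_neg one_ne_zero, harg, elogr, if_neg (not_le.2 (div_pos hx z.2)),
          Real.log_div hx.ne' z.2.ne', inv_one, EReal.coe_one, one_mul, ← EReal.coe_add]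
        congr 1
        ring
      have hRHSbary : hsBary (c / p) ν
          = eexp (eIntegral ν (fun x => ((Real.log x : ℝ) : EReal))) := by
        rw [hcp1]
        unfold hsBary
        rw [iInf_congr hK1, iInf_const]
      have hA : ∀ y : {y : ℝ // 0 < y}, (∫ x, Kr c y.1 x ∂μ)
          = (Real.log (hsB c) - Real.log c)
            + ∫ x, Real.log (c * x + (1 - c) * y.1) ∂ν := by
        intro y
        rw [hsplit y.1 y.2, ← hcrit]
        have hintK : Integrable (Kr c y.1) ν := integrable_Kr hνae0 hintν hc0 hc1' y.2
        have hintlog : Integrable (fun x => Real.log (c * x + (1 - c) * y.1)) ν :=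
          integrable_log_affine hνae0 hintν hc0.le (mul_pos (by linarith) y.2)
        have hQ : (∫ x, ((1 - c) * Kr c y.1 0 + c * Kr c y.1 x) ∂ν)
            = ∫ x, ((Real.log (hsB c) - Real.log c)
              + Real.log (c * x + (1 - c) * y.1)) ∂ν :=
          integral_congr_ae (hνpos.mono fun x hx => kernel_identity_crit hc0 hc1' hx y.2)
        rw [integral_add (integrable_const _) (hintK.const_mul c), integral_const,
          probReal_univ, integral_add (integrable_const _) hintlog, integral_const,
          probReal_univ, integral_const_mul] at hQ
        simp only [ENNReal.toReal_one, one_smul, smul_eq_mul] at hQ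
        linarith [hQ]
      unfold hsBary
      have hIy : (⨅ y : {y : ℝ // 0 < y}, eIntegral μ (fun x => hsKernel c x y.1))
          = ((Real.log (hsB c) - Real.log c : ℝ) : EReal)
            + ⨅ y : {y : ℝ // 0 < y},
              ((∫ x, Real.log (c * x + (1 - c) * y.1) ∂ν : ℝ) : EReal) := by
        rw [iInf_congr (fun y => by rw [hEμ y, hA y, EReal.coe_add] :
          ∀ y : {y : ℝ // 0 < y}, eIntegral μ (fun x => hsKernel c x y.1)
            = ((Real.log (hsB c) - Real.log c : ℝ) : EReal)
              + ((∫ x, Real.log (c * x + (1 - c) * y.1) ∂ν : ℝ) : EReal))]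
        exact iInf_coe_add _ _
      rw [hIy, iInf_H ν hνpos hintν hc0 hc1', hcp1, hB1, div_one, iInf_congr hK1, iInf_const,
        ← add_assoc, ← EReal.coe_add, eexp_coe_add]
      congr 2
      rw [sub_add_cancel, Real.exp_log (hsB_pos hc0 hc1'.le)]
    · -- subcritical case : c < p
      set c' : ℝ := c / p with hc'
      have hc'0 : 0 < c' := div_pos hc0 hp0
      have hc'1 : c' < 1 := (div_lt_one hp0).2 hsub
      set k : ℝ := (1 - c) / (p * (1 - c')) with hk
      have hkpos : 0 < k := div_pos (by linarith) (mul_pos hp0 (by linarith))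
      set D : ℝ := Real.log (hsB c / hsB c') with hD
      set G : {y : ℝ // 0 < y} → EReal :=
        fun z => eIntegral ν (fun x => hsKernel c' x z.1) with hG
      have hKey : ∀ y : {y : ℝ // 0 < y}, eIntegral μ (fun x => hsKernel c x y.1)
          = (D : EReal) + G ⟨k * y.1, mul_pos hkpos y.2⟩ := by
        intro y
        show eIntegral μ (fun x => hsKernel c x y.1)
          = (D : EReal) + eIntegral ν (fun x => hsKernel c' x (k * y.1))
        rw [hEμ y, eIntegral_hsKernel hνae0 hintν hc'0 hc'1 (mul_pos hkpos y.2),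
          ← EReal.coe_add, EReal.coe_eq_coe_iff]
        rw [hsplit y.1 y.2]
        have hint1 : Integrable (Kr c y.1) ν := integrable_Kr hνae0 hintν hc0 hc1' y.2
        have hint2 : Integrable (Kr c' (k * y.1)) ν :=
          integrable_Kr hνae0 hintν hc'0 hc'1 (mul_pos hkpos y.2)
        have hQ : (∫ x, ((1 - p) * Kr c y.1 0 + p * Kr c y.1 x) ∂ν)
            = ∫ x, (D + Kr c' (k * y.1) x) ∂ν := by
          refine integral_congr_ae ?_
          filter_upwards [hνpos] with x hx
          exact kernel_identity hc0 hsub hp1 hx y.2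
        rw [integral_add (integrable_const _) (hint1.const_mul p), integral_const,
          probReal_univ, integral_add (integrable_const _) hint2, integral_const,
          probReal_univ, integral_const_mul] at hQ
        simp only [ENNReal.toReal_one, one_smul, smul_eq_mul] at hQ
        linarith [hQ]
      unfold hsBary
      have hIy : (⨅ y : {y : ℝ // 0 < y}, eIntegral μ (fun x => hsKernel c x y.1))
          = (D : EReal) + ⨅ y : {y : ℝ // 0 < y}, G y := by
        rw [iInf_congr hKey, iInf_coe_add, iInf_pos_scale k hkpos G]
      rw [hIy, eexp_coe_add, hD,
        Real.exp_log (div_pos (hsB_pos hc0 hc1'.le) (hsB_pos hc'0 hc'1.le))]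
end

section
/- Fix c ∈ [0,1]. For Borel probability measures μ, ν on [0,∞) with ∫ log(1+x) dμ(x) < ∞ and ∫ log(1+x) dν(x) < ∞, and any t ∈ [0,1], one has [(1−t)·μ + t·ν]_c ≥ [μ]_c^{1−t} · [ν]_c^{t}; that is, the HS barycenter is a log-concave function of the measure. -/
open MeasureTheory Filter Topology
open scoped ENNReal

lemma erealToENNReal_bot : erealToENNReal ⊥ = 0 := by
  simp [erealToENNReal]

lemma erealToENNReal_mono {a b : EReal} (h : a ≤ b) : erealToENNReal a ≤ erealToENNReal b := by
  unfold erealToENNReal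
  by_cases hb : b = ⊤
  · simp [hb]
  · have ha : a ≠ ⊤ := fun h' => hb (top_le_iff.mp (h' ▸ h))
    rw [if_neg ha, if_neg hb]
    by_cases ha' : a = ⊥
    · simp [ha']
    · exact ENNReal.ofReal_le_ofReal (EReal.toReal_le_toReal h ha' hb)

lemma eexp_top : eexp ⊤ = ⊤ := by simp [eexp]

lemma eexp_mono : Monotone eexp := by
  intro a b h
  induction b using EReal.rec with
  | bot => rw [le_bot_iff.mp h]
  | top => rw [eexp_top]; exact le_top
  | coe b =>
    induction a using EReal.rec with
    | bot => rw [eexp_bot]; exact zero_le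
    | top => exact absurd (top_le_iff.mp h) (EReal.coe_ne_top b)
    | coe a =>
      rw [eexp_coe, eexp_coe]
      exact ENNReal.ofReal_le_ofReal (Real.exp_le_exp.mpr (EReal.coe_le_coe_iff.mp h))

lemma eexp_add_mul_le {s u : ℝ} (hs : 0 < s) (hu : 0 < u) (A B : EReal) :
    eexp A ^ s * eexp B ^ u ≤ eexp ((s : EReal) * A + (u : EReal) * B) := by
  rcases eq_or_ne A ⊥ with rfl | hA
  · rw [EReal.coe_mul_bot_of_pos hs, EReal.bot_add, eexp_bot, ENNReal.zero_rpow_of_pos hs,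
      zero_mul]
  rcases eq_or_ne B ⊥ with rfl | hB
  · rw [EReal.coe_mul_bot_of_pos hu, EReal.add_bot, eexp_bot, ENNReal.zero_rpow_of_pos hu,
      mul_zero]
  induction A using EReal.rec with
  | bot => exact absurd rfl hA
  | top =>
    rw [EReal.coe_mul_top_of_pos hs, EReal.top_add_of_ne_bot, eexp_top]
    · exact le_top
    · induction B using EReal.rec with
      | bot => exact absurd rfl hB
      | top => rw [EReal.coe_mul_top_of_pos hu]; exact bot_lt_top.ne'
      | coe b => rw [← EReal.coe_mul]; exact EReal.coe_ne_bot _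
  | coe a =>
    induction B using EReal.rec with
    | bot => exact absurd rfl hB
    | top =>
      rw [EReal.coe_mul_top_of_pos hu, ← EReal.coe_mul, EReal.coe_add_top, eexp_top]
      exact le_top
    | coe b =>
      rw [← EReal.coe_mul, ← EReal.coe_mul, ← EReal.coe_add, eexp_coe, eexp_coe, eexp_coe]
      rw [ENNReal.ofReal_rpow_of_pos (Real.exp_pos a), ENNReal.ofReal_rpow_of_pos (Real.exp_pos b),
        ← ENNReal.ofReal_mul (by positivity)]
      refine le_of_eq ?_
      congr 1
      rw [← Real.exp_mul, ← Real.exp_mul, ← Real.exp_add]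
      ring_nf

lemma coe_ennreal_fin {X : ℝ≥0∞} (hX : X ≠ ⊤) : (X : EReal) = ((X.toReal : ℝ) : EReal) := by
  conv_lhs => rw [← ENNReal.ofReal_toReal hX]
  rw [EReal.coe_ennreal_ofReal, max_eq_left ENNReal.toReal_nonneg]

lemma claimB {s u : ℝ} (hs : 0 < s) (hu : 0 < u) {P1 N1 P2 N2 : ℝ≥0∞}
    (h : (P1 ≠ ⊤ ∧ P2 ≠ ⊤) ∨ (N1 ≠ ⊤ ∧ N2 ≠ ⊤)) :
    (s : EReal) * ((P1 : EReal) - (N1 : EReal)) + (u : EReal) * ((P2 : EReal) - (N2 : EReal)) ≤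
      ((ENNReal.ofReal s * P1 + ENNReal.ofReal u * P2 : ℝ≥0∞) : EReal)
        - ((ENNReal.ofReal s * N1 + ENNReal.ofReal u * N2 : ℝ≥0∞) : EReal) := by
  by_cases hN1 : N1 = ⊤
  · rw [hN1, EReal.coe_ennreal_top,
      show (P1 : EReal) - ⊤ = ⊥ from by rw [sub_eq_add_neg, EReal.neg_top, EReal.add_bot],
      EReal.coe_mul_bot_of_pos hs, EReal.bot_add]
    exact bot_le
  by_cases hN2 : N2 = ⊤
  · rw [hN2, EReal.coe_ennreal_top,
      show (P2 : EReal) - ⊤ = ⊥ from by rw [sub_eq_add_neg, EReal.neg_top, EReal.add_bot],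
      EReal.coe_mul_bot_of_pos hu, EReal.add_bot]
    exact bot_le
  have hNsum : ENNReal.ofReal s * N1 + ENNReal.ofReal u * N2 ≠ ⊤ := by
    simp [ENNReal.add_eq_top, ENNReal.mul_eq_top, hN1, hN2, ENNReal.ofReal_ne_top]
  by_cases hP1 : P1 = ⊤
  · have hPs : ENNReal.ofReal s * P1 + ENNReal.ofReal u * P2 = ⊤ := by
      rw [hP1, ENNReal.mul_top (ENNReal.ofReal_pos.mpr hs).ne', top_add]
    rw [hPs, EReal.coe_ennreal_top, coe_ennreal_fin hNsum, EReal.top_sub_coe]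
    exact le_top
  by_cases hP2 : P2 = ⊤
  · have hPs : ENNReal.ofReal s * P1 + ENNReal.ofReal u * P2 = ⊤ := by
      rw [hP2, ENNReal.mul_top (ENNReal.ofReal_pos.mpr hu).ne', add_top]
    rw [hPs, EReal.coe_ennreal_top, coe_ennreal_fin hNsum, EReal.top_sub_coe]
    exact le_top
  · have hPsum : ENNReal.ofReal s * P1 + ENNReal.ofReal u * P2 ≠ ⊤ := by
      simp [ENNReal.add_eq_top, ENNReal.mul_eq_top, hP1, hP2, ENNReal.ofReal_ne_top]
    rw [coe_ennreal_fin hP1, coe_ennreal_fin hP2, coe_ennreal_fin hN1, coe_ennreal_fin hN2,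
      coe_ennreal_fin hPsum, coe_ennreal_fin hNsum]
    have e1 : (ENNReal.ofReal s * P1 + ENNReal.ofReal u * P2).toReal
        = s * P1.toReal + u * P2.toReal := by
      rw [ENNReal.toReal_add (by simp [ENNReal.mul_eq_top, hP1, ENNReal.ofReal_ne_top])
        (by simp [ENNReal.mul_eq_top, hP2, ENNReal.ofReal_ne_top]),
        ENNReal.toReal_mul, ENNReal.toReal_mul, ENNReal.toReal_ofReal hs.le,
        ENNReal.toReal_ofReal hu.le]
    have e2 : (ENNReal.ofReal s * N1 + ENNReal.ofReal u * N2).toReal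
        = s * N1.toReal + u * N2.toReal := by
      rw [ENNReal.toReal_add (by simp [ENNReal.mul_eq_top, hN1, ENNReal.ofReal_ne_top])
        (by simp [ENNReal.mul_eq_top, hN2, ENNReal.ofReal_ne_top]),
        ENNReal.toReal_mul, ENNReal.toReal_mul, ENNReal.toReal_ofReal hs.le,
        ENNReal.toReal_ofReal hu.le]
    rw [e1, e2, ← EReal.coe_sub, ← EReal.coe_sub, ← EReal.coe_mul, ← EReal.coe_mul,
      ← EReal.coe_add, ← EReal.coe_sub]
    exact EReal.coe_le_coe_iff.mpr (le_of_eq (by ring))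

lemma ae_nonneg {μ : Measure ℝ} (h : μ (Set.Iio 0) = 0) : ∀ᵐ x ∂μ, 0 ≤ x := by
  rw [ae_iff]
  convert h using 2
  ext x
  simp [not_le]

lemma hsKernel_lb {c : ℝ} (hc0 : 0 ≤ c) (hc1 : c < 1) {y : ℝ} (hy : 0 < y) {x : ℝ} (hx : 0 ≤ x) :
    ((if c = 0 then Real.log y - 1 else Real.log y + c⁻¹ * Real.log (1 - c) : ℝ) : EReal)
      ≤ hsKernel c x y := by
  unfold hsKernel
  by_cases hc : c = 0
  · rw [if_pos hc, if_pos hc]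
    have : 0 ≤ y⁻¹ * x := mul_nonneg (inv_nonneg.mpr hy.le) hx
    exact EReal.coe_le_coe_iff.mpr (by linarith)
  · rw [if_neg hc, if_neg hc]
    have hcpos : 0 < c := lt_of_le_of_ne hc0 (Ne.symm hc)
    have hnn : 0 ≤ c * y⁻¹ * x := by positivity
    have harg : 0 < c * y⁻¹ * x + 1 - c := by linarith
    rw [show elogr (c * y⁻¹ * x + 1 - c) = ((Real.log (c * y⁻¹ * x + 1 - c) : ℝ) : EReal) from
      by unfold elogr; rw [if_neg (not_le.mpr harg)]]
    rw [← EReal.coe_mul, ← EReal.coe_add]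
    apply EReal.coe_le_coe_iff.mpr
    have hlog : Real.log (1 - c) ≤ Real.log (c * y⁻¹ * x + 1 - c) :=
      Real.log_le_log (by linarith) (by linarith)
    have := mul_le_mul_of_nonneg_left hlog (inv_nonneg.mpr hcpos.le)
    linarith

lemma negpart_fin {c : ℝ} (hc0 : 0 ≤ c) (hc1 : c < 1) (μ : Measure ℝ) [IsProbabilityMeasure μ]
    (hsupp : μ (Set.Iio 0) = 0) {y : ℝ} (hy : 0 < y) :
    ∫⁻ x, erealToENNReal (-(hsKernel c x y)) ∂μ ≠ ⊤ := by
  set L : ℝ := if c = 0 then Real.log y - 1 else Real.log y + c⁻¹ * Real.log (1 - c) with hL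
  have hbd : ∀ᵐ x ∂μ, erealToENNReal (-(hsKernel c x y)) ≤ ENNReal.ofReal (-L) := by
    filter_upwards [ae_nonneg hsupp] with x hx
    calc erealToENNReal (-(hsKernel c x y)) ≤ erealToENNReal ((-L : ℝ) : EReal) := by
          apply erealToENNReal_mono
          rw [EReal.coe_neg]
          exact EReal.neg_le_neg_iff.mpr (hsKernel_lb hc0 hc1 hy hx)
      _ = ENNReal.ofReal (-L) := erealToENNReal_coe _
  have hle : ∫⁻ x, erealToENNReal (-(hsKernel c x y)) ∂μ ≤ ENNReal.ofReal (-L) := by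
    calc ∫⁻ x, erealToENNReal (-(hsKernel c x y)) ∂μ
        ≤ ∫⁻ _x, ENNReal.ofReal (-L) ∂μ := lintegral_mono_ae hbd
      _ = ENNReal.ofReal (-L) := by simp
  exact ne_top_of_le_ne_top ENNReal.ofReal_ne_top hle

lemma pospart_fin (μ : Measure ℝ) [IsProbabilityMeasure μ] (hsupp : μ (Set.Iio 0) = 0)
    (hint : Integrable (fun x => Real.log (1 + x)) μ) {y : ℝ} (hy : 0 < y) :
    ∫⁻ x, erealToENNReal (hsKernel 1 x y) ∂μ ≠ ⊤ := by
  have hbd : ∀ᵐ x ∂μ, erealToENNReal (hsKernel 1 x y) ≤ (‖Real.log (1 + x)‖₊ : ℝ≥0∞) := by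
    filter_upwards [ae_nonneg hsupp] with x hx
    have key : erealToENNReal (hsKernel 1 x y) ≤ ENNReal.ofReal (Real.log (1 + x)) := by
      unfold hsKernel
      rw [if_neg one_ne_zero]
      rcases eq_or_lt_of_le hx with h0 | h0
      · have hb : elogr (1 * y⁻¹ * x + 1 - 1) = ⊥ := by
          simp [elogr, ← h0]
        rw [hb, EReal.coe_mul_bot_of_pos (by norm_num), EReal.add_bot, erealToENNReal_bot]
        exact zero_le
      · have harg : 0 < 1 * y⁻¹ * x + 1 - 1 := by
          have h2 : (1 : ℝ) * y⁻¹ * x + 1 - 1 = y⁻¹ * x := by ring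
          rw [h2]
          exact mul_pos (inv_pos.mpr hy) h0
        rw [show elogr (1 * y⁻¹ * x + 1 - 1) = ((Real.log (1 * y⁻¹ * x + 1 - 1) : ℝ) : EReal) from
          by unfold elogr; rw [if_neg (not_le.mpr harg)]]
        rw [← EReal.coe_mul, ← EReal.coe_add, erealToENNReal_coe]
        apply ENNReal.ofReal_le_ofReal
        rw [show (1 : ℝ) * y⁻¹ * x + 1 - 1 = y⁻¹ * x from by ring,
          Real.log_mul (inv_pos.mpr hy).ne' h0.ne', Real.log_inv]
        have hlog : Real.log x ≤ Real.log (1 + x) := Real.log_le_log h0 (by linarith)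
        rw [inv_one]
        linarith
    exact key.trans (Real.ofReal_le_enorm _)
  have hle : ∫⁻ x, erealToENNReal (hsKernel 1 x y) ∂μ
      ≤ ∫⁻ x, (‖Real.log (1 + x)‖₊ : ℝ≥0∞) ∂μ := lintegral_mono_ae hbd
  exact ne_top_of_le_ne_top hint.2.ne hle

/-- the HS barycenter is a log-concave function of the measure. -/
theorem hsBary_logConcave_measure (c : ℝ) (hc : c ∈ Set.Icc (0 : ℝ) 1)
    (μ ν : Measure ℝ) [IsProbabilityMeasure μ] [IsProbabilityMeasure ν]
    (hsuppμ : μ (Set.Iio 0) = 0) (hsuppν : ν (Set.Iio 0) = 0)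
    (hintμ : Integrable (fun x => Real.log (1 + x)) μ)
    (hintν : Integrable (fun x => Real.log (1 + x)) ν)
    (t : ℝ) (ht : t ∈ Set.Icc (0 : ℝ) 1) :
    hsBary c μ ^ (1 - t) * hsBary c ν ^ t ≤
      hsBary c (ENNReal.ofReal (1 - t) • μ + ENNReal.ofReal t • ν) := by
  obtain ⟨hc0, hc1⟩ := hc
  obtain ⟨ht0, ht1⟩ := ht
  rcases eq_or_lt_of_le ht0 with h0 | h0
  · subst h0
    simp [ENNReal.rpow_one, ENNReal.rpow_zero, ENNReal.ofReal_one]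
  rcases eq_or_lt_of_le ht1 with h1 | h1
  · subst h1
    simp [ENNReal.rpow_one, ENNReal.rpow_zero, ENNReal.ofReal_one]
  have hs : 0 < 1 - t := by linarith
  have key : ∀ y : {y : ℝ // 0 < y},
      ((1 - t : ℝ) : EReal) * (⨅ z : {y : ℝ // 0 < y}, eIntegral μ (fun x => hsKernel c x z))
        + ((t : ℝ) : EReal) * (⨅ z : {y : ℝ // 0 < y}, eIntegral ν (fun x => hsKernel c x z))
        ≤ eIntegral (ENNReal.ofReal (1 - t) • μ + ENNReal.ofReal t • ν)
            (fun x => hsKernel c x y) := by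
    intro y
    have step1 : ((1 - t : ℝ) : EReal)
          * (⨅ z : {y : ℝ // 0 < y}, eIntegral μ (fun x => hsKernel c x z))
        + ((t : ℝ) : EReal) * (⨅ z : {y : ℝ // 0 < y}, eIntegral ν (fun x => hsKernel c x z))
        ≤ ((1 - t : ℝ) : EReal) * eIntegral μ (fun x => hsKernel c x y)
          + ((t : ℝ) : EReal) * eIntegral ν (fun x => hsKernel c x y) :=
      add_le_add
        (mul_le_mul_of_nonneg_left (iInf_le _ y) (by exact_mod_cast hs.le))
        (mul_le_mul_of_nonneg_left (iInf_le _ y) (by exact_mod_cast h0.le))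
    refine step1.trans ?_
    have l1 : ∀ f : ℝ → ℝ≥0∞,
        ∫⁻ x, f x ∂(ENNReal.ofReal (1 - t) • μ + ENNReal.ofReal t • ν)
          = ENNReal.ofReal (1 - t) * ∫⁻ x, f x ∂μ + ENNReal.ofReal t * ∫⁻ x, f x ∂ν := by
      intro f
      rw [lintegral_add_measure, lintegral_smul_measure, lintegral_smul_measure]
      simp only [smul_eq_mul]
    simp only [eIntegral, l1]
    apply claimB hs h0
    rcases eq_or_lt_of_le hc1 with hceq | hclt
    · subst hceq
      exact Or.inl ⟨pospart_fin μ hsuppμ hintμ y.2, pospart_fin ν hsuppν hintν y.2⟩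
    · exact Or.inr ⟨negpart_fin hc0 hclt μ hsuppμ y.2, negpart_fin hc0 hclt ν hsuppν y.2⟩
  calc hsBary c μ ^ (1 - t) * hsBary c ν ^ t
      ≤ eexp (((1 - t : ℝ) : EReal)
            * (⨅ z : {y : ℝ // 0 < y}, eIntegral μ (fun x => hsKernel c x z))
          + ((t : ℝ) : EReal)
            * (⨅ z : {y : ℝ // 0 < y}, eIntegral ν (fun x => hsKernel c x z))) :=
        eexp_add_mul_le hs h0 _ _
    _ ≤ hsBary c (ENNReal.ofReal (1 - t) • μ + ENNReal.ofReal t • ν) :=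
        eexp_mono (le_iInf key)
end

section
/- Let μ ≠ δ₀ be a Borel probability measure on [0,∞) with ∫ log(1+x) dμ(x) < ∞. Then the function c ↦ [μ]_c^c is log-concave on [0,1]; equivalently, the function g(c) := c · log [μ]_c (with g(0) := 0, values in [−∞,+∞)) is concave on [0,1]. -/
open MeasureTheory Filter Topology
open scoped ENNReal

/-- Logarithm on `[0,∞]`, with values in `EReal`. -/
noncomputable def elog (x : ℝ≥0∞) : EReal :=
  if x = 0 then ⊥ else if x = ⊤ then ⊤ else ((Real.log x.toReal : ℝ) : EReal)

namespace HSAux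

open MeasureTheory
open scoped ENNReal

lemma elogr_ne_top (t : ℝ) : elogr t ≠ ⊤ := by
  unfold elogr; split <;> simp

lemma elogr_one : elogr 1 = 0 := by simp [elogr]

lemma erealToENNReal_coe (r : ℝ) : erealToENNReal (r : EReal) = ENNReal.ofReal r := by
  simp [erealToENNReal]

lemma erealToENNReal_bot : erealToENNReal ⊥ = 0 := by simp [erealToENNReal]

lemma erealToENNReal_top : erealToENNReal ⊤ = ⊤ := by simp [erealToENNReal]

lemma erealToENNReal_zero : erealToENNReal 0 = 0 := by
  rw [show (0 : EReal) = ((0:ℝ) : EReal) by norm_cast, erealToENNReal_coe]; simp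

/-- scalar multiplication and erealToENNReal -/
lemma erealToENNReal_mul {a : ℝ} (ha : 0 < a) (z : EReal) :
    erealToENNReal ((a : EReal) * z) = ENNReal.ofReal a * erealToENNReal z := by
  induction z using EReal.rec with
  | bot =>
    rw [EReal.coe_mul_bot_of_pos ha, erealToENNReal_bot, mul_zero]
  | coe r =>
    rw [← EReal.coe_mul, erealToENNReal_coe, erealToENNReal_coe,
      ENNReal.ofReal_mul ha.le]
  | top =>
    rw [EReal.coe_mul_top_of_pos ha, erealToENNReal_top, ENNReal.mul_top]
    simp [ENNReal.ofReal_eq_zero, not_le.2 ha]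

lemma coe_mul_ne_top {a : ℝ} (ha : 0 ≤ a) (z : EReal) (hz : z ≠ ⊤) : (a : EReal) * z ≠ ⊤ := by
  induction z using EReal.rec with
  | bot =>
    rcases ha.eq_or_lt with h | h
    · rw [← h]; rw [show ((0:ℝ):EReal) = 0 by norm_cast, EReal.zero_mul]; simp
    · rw [EReal.coe_mul_bot_of_pos h]; simp
  | coe r => rw [← EReal.coe_mul]; exact EReal.coe_ne_top _
  | top => exact absurd rfl hz

lemma mul_coe_add {s : ℝ} (hs : 0 < s) (p : ℝ) (B : EReal) (hB : B ≠ ⊤) :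
    (s : EReal) * ((p : EReal) + B) = ((s * p : ℝ) : EReal) + (s : EReal) * B := by
  induction B using EReal.rec with
  | bot =>
    rw [EReal.add_bot, EReal.coe_mul_bot_of_pos hs, EReal.add_bot]
  | coe r =>
    rw [← EReal.coe_add, ← EReal.coe_mul, ← EReal.coe_mul, ← EReal.coe_add]
    norm_cast; ring
  | top => exact absurd rfl hB

lemma mul_inv_cancel_mul {c : ℝ} (hc : 0 < c) (z : EReal) :
    (c : EReal) * (((c⁻¹ : ℝ) : EReal) * z) = z := by
  induction z using EReal.rec with
  | bot =>
    rw [EReal.coe_mul_bot_of_pos (by positivity), EReal.coe_mul_bot_of_pos hc]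
  | coe r =>
    rw [← EReal.coe_mul, ← EReal.coe_mul]
    norm_cast
    field_simp
  | top =>
    rw [EReal.coe_mul_top_of_pos (by positivity), EReal.coe_mul_top_of_pos hc]

lemma elog_eexp (z : EReal) : elog (eexp z) = z := by
  induction z using EReal.rec with
  | bot => simp [eexp, elog]
  | coe r =>
    have h1 : eexp (r : EReal) = ENNReal.ofReal (Real.exp r) := by
      simp [eexp]
    rw [h1, elog]
    rw [if_neg (by simp [ENNReal.ofReal_eq_zero, Real.exp_pos r, not_le.2 (Real.exp_pos r)]),
      if_neg (by simp)]
    rw [ENNReal.toReal_ofReal (Real.exp_pos r).le, Real.log_exp]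
  | top => simp [eexp, elog]

end HSAux
namespace HSAux

open MeasureTheory
open scoped ENNReal

noncomputable def psiArg (c y x : ℝ) : ℝ := 1 + c * (y⁻¹ * x - 1)

noncomputable def psi (c y x : ℝ) : EReal :=
  ((c * Real.log y : ℝ) : EReal) + elogr (psiArg c y x)

lemma psi_ne_top (c y x : ℝ) : psi c y x ≠ ⊤ := by
  unfold psi elogr
  split
  · rw [EReal.add_bot]; simp
  · rw [← EReal.coe_add]; exact EReal.coe_ne_top _

lemma psi_zero (y x : ℝ) : psi 0 y x = 0 := by
  simp [psi, psiArg, elogr_one]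

/-- concavity of elogr along segments -/
lemma elogr_combo {s u : ℝ} (hs : 0 < s) (hu : 0 < u) (hsu : s + u = 1) (u₁ u₂ : ℝ) :
    (s : EReal) * elogr u₁ + (u : EReal) * elogr u₂ ≤ elogr (s * u₁ + u * u₂) := by
  by_cases h₁ : u₁ ≤ 0
  · rw [show elogr u₁ = ⊥ from if_pos h₁, EReal.coe_mul_bot_of_pos hs, EReal.bot_add]
    exact bot_le
  by_cases h₂ : u₂ ≤ 0
  · rw [show elogr u₂ = ⊥ from if_pos h₂, EReal.coe_mul_bot_of_pos hu, EReal.add_bot]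
    exact bot_le
  push_neg at h₁ h₂
  have hpos : 0 < s * u₁ + u * u₂ := by positivity
  rw [show elogr u₁ = ((Real.log u₁ : ℝ) : EReal) from if_neg (not_le.2 h₁),
    show elogr u₂ = ((Real.log u₂ : ℝ) : EReal) from if_neg (not_le.2 h₂),
    show elogr (s * u₁ + u * u₂) = ((Real.log (s * u₁ + u * u₂) : ℝ) : EReal) from
      if_neg (not_le.2 hpos), ← EReal.coe_mul, ← EReal.coe_mul, ← EReal.coe_add,
    EReal.coe_le_coe_iff]
  have := (strictConcaveOn_log_Ioi.concaveOn).2 (Set.mem_Ioi.2 h₁) (Set.mem_Ioi.2 h₂)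
    hs.le hu.le hsu
  simpa [smul_eq_mul] using this

lemma psiArg_combo {s u : ℝ} (hsu : s + u = 1) (c₁ c₂ y x : ℝ) :
    psiArg (s * c₁ + u * c₂) y x = s * psiArg c₁ y x + u * psiArg c₂ y x := by
  unfold psiArg; linear_combination -hsu

/-- pointwise concavity of psi in the parameter c -/
lemma psi_combo {s u : ℝ} (hs : 0 < s) (hu : 0 < u) (hsu : s + u = 1) (c₁ c₂ y x : ℝ) :
    (s : EReal) * psi c₁ y x + (u : EReal) * psi c₂ y x ≤ psi (s * c₁ + u * c₂) y x := by
  unfold psi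
  rw [mul_coe_add hs _ _ (elogr_ne_top _), mul_coe_add hu _ _ (elogr_ne_top _),
    add_add_add_comm, psiArg_combo hsu, ← EReal.coe_add,
    show s * (c₁ * Real.log y) + u * (c₂ * Real.log y) = (s * c₁ + u * c₂) * Real.log y by ring]
  exact add_le_add (le_refl _) (elogr_combo hs hu hsu _ _)

/-- psi equals c times the HS kernel for positive c -/
lemma psi_eq_mul_kernel {c : ℝ} (hc : 0 < c) (y x : ℝ) :
    (c : EReal) * hsKernel c x y = psi c y x := by
  rw [hsKernel, if_neg hc.ne']
  have harg : c * y⁻¹ * x + 1 - c = psiArg c y x := by unfold psiArg; ring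
  rw [harg, mul_coe_add hc _ _ (coe_mul_ne_top (by positivity) _ (elogr_ne_top _)),
    mul_inv_cancel_mul hc, psi]

end HSAux
namespace HSAux

open MeasureTheory
open scoped ENNReal

lemma psi_eq_ite (c y x : ℝ) :
    psi c y x = if psiArg c y x ≤ 0 then ⊥
      else ((c * Real.log y + Real.log (psiArg c y x) : ℝ) : EReal) := by
  unfold psi elogr
  split
  · rw [EReal.add_bot]
  · rw [← EReal.coe_add]

lemma erealToENNReal_psi (c y x : ℝ) :
    erealToENNReal (psi c y x) = if psiArg c y x ≤ 0 then 0
      else ENNReal.ofReal (c * Real.log y + Real.log (psiArg c y x)) := by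
  rw [psi_eq_ite]
  split
  · exact erealToENNReal_bot
  · exact erealToENNReal_coe _

lemma erealToENNReal_neg_psi (c y x : ℝ) :
    erealToENNReal (-psi c y x) = if psiArg c y x ≤ 0 then ⊤
      else ENNReal.ofReal (-(c * Real.log y + Real.log (psiArg c y x))) := by
  rw [psi_eq_ite]
  split
  · simp [erealToENNReal_top]
  · rw [← EReal.coe_neg]; exact erealToENNReal_coe _

lemma measurable_psiArg (c y : ℝ) : Measurable fun x => psiArg c y x := by
  unfold psiArg; fun_prop

lemma measurable_pos_part (c y : ℝ) :
    Measurable fun x => erealToENNReal (psi c y x) := by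
  simp only [erealToENNReal_psi]
  refine Measurable.ite ?_ measurable_const ?_
  · exact measurableSet_le (measurable_psiArg c y) measurable_const
  · exact (measurable_const.add (Real.measurable_log.comp (measurable_psiArg c y))).ennreal_ofReal

lemma measurable_neg_part (c y : ℝ) :
    Measurable fun x => erealToENNReal (-psi c y x) := by
  simp only [erealToENNReal_neg_psi]
  refine Measurable.ite ?_ measurable_const ?_
  · exact measurableSet_le (measurable_psiArg c y) measurable_const
  · exact ((measurable_const.add
      (Real.measurable_log.comp (measurable_psiArg c y))).neg).ennreal_ofReal

/-- the positive part of psi has finite integral -/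
lemma lintegral_pos_part_lt_top (μ : Measure ℝ) [IsProbabilityMeasure μ]
    (hsupp : μ (Set.Iio 0) = 0) (hint : Integrable (fun x => Real.log (1 + x)) μ)
    {c y : ℝ} (hc0 : 0 ≤ c) (hc1 : c ≤ 1) (hy : 0 < y) :
    ∫⁻ x, erealToENNReal (psi c y x) ∂μ < ⊤ := by
  have hae : ∀ᵐ x ∂μ, 0 ≤ x := by
    rw [ae_iff]
    convert hsupp using 2
    ext x; simp [not_le]
  have hbound : ∀ᵐ x ∂μ, erealToENNReal (psi c y x) ≤
      ENNReal.ofReal (Real.log (1 + x)) +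
        ENNReal.ofReal (|Real.log y| + Real.log (1 + y⁻¹)) := by
    filter_upwards [hae] with x hx
    rw [erealToENNReal_psi]
    split
    · exact zero_le
    rename_i harg
    push_neg at harg
    have hy' : (0:ℝ) < y⁻¹ := by positivity
    have h1 : c * Real.log y ≤ |Real.log y| := by
      calc c * Real.log y ≤ |c * Real.log y| := le_abs_self _
        _ = c * |Real.log y| := by rw [abs_mul, abs_of_nonneg hc0]
        _ ≤ 1 * |Real.log y| := by
            apply mul_le_mul_of_nonneg_right hc1 (abs_nonneg _)
        _ = |Real.log y| := one_mul _
    have h2 : Real.log (psiArg c y x) ≤ Real.log (1 + x) + Real.log (1 + y⁻¹) := by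
      have hA : psiArg c y x ≤ (1 + x) * (1 + y⁻¹) := by
        unfold psiArg
        nlinarith [mul_nonneg hy'.le hx, mul_nonneg (mul_nonneg hc0 hy'.le) hx]
      calc Real.log (psiArg c y x) ≤ Real.log ((1 + x) * (1 + y⁻¹)) :=
            Real.log_le_log harg hA
        _ = Real.log (1 + x) + Real.log (1 + y⁻¹) := by
            rw [Real.log_mul (by linarith) (by linarith)]
    calc ENNReal.ofReal (c * Real.log y + Real.log (psiArg c y x))
        ≤ ENNReal.ofReal (Real.log (1 + x) + (|Real.log y| + Real.log (1 + y⁻¹))) := by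
          apply ENNReal.ofReal_le_ofReal; linarith
      _ ≤ _ := ENNReal.ofReal_add_le
  calc ∫⁻ x, erealToENNReal (psi c y x) ∂μ
      ≤ ∫⁻ x, (ENNReal.ofReal (Real.log (1 + x)) +
          ENNReal.ofReal (|Real.log y| + Real.log (1 + y⁻¹))) ∂μ := lintegral_mono_ae hbound
    _ = (∫⁻ x, ENNReal.ofReal (Real.log (1 + x)) ∂μ) +
          ENNReal.ofReal (|Real.log y| + Real.log (1 + y⁻¹)) * μ Set.univ := by
        rw [lintegral_add_right _ measurable_const, lintegral_const]
    _ < ⊤ := by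
        apply ENNReal.add_lt_top.2
        constructor
        · calc ∫⁻ x, ENNReal.ofReal (Real.log (1 + x)) ∂μ
              ≤ ∫⁻ x, (‖Real.log (1 + x)‖₊ : ℝ≥0∞) ∂μ :=
                lintegral_mono fun x => Real.ofReal_le_enorm _
            _ < ⊤ := hint.2
        · exact ENNReal.mul_lt_top ENNReal.ofReal_lt_top (measure_lt_top μ _)

end HSAux
namespace HSAux

open MeasureTheory
open scoped ENNReal

lemma ofReal_max (r : ℝ) : ENNReal.ofReal r = ENNReal.ofReal (max r 0) := by
  rcases le_total r 0 with h | h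
  · rw [ENNReal.ofReal_eq_zero.2 h, eq_comm, ENNReal.ofReal_eq_zero.2 (max_le h le_rfl)]
  · rw [max_eq_left h]

lemma ofReal_triple_ineq {p q r : ℝ} (h : p + q ≤ r) :
    ENNReal.ofReal p + ENNReal.ofReal q + ENNReal.ofReal (-r) ≤
      ENNReal.ofReal r + ENNReal.ofReal (-p) + ENNReal.ofReal (-q) := by
  rw [ofReal_max p, ofReal_max q, ofReal_max (-r), ofReal_max r, ofReal_max (-p),
    ofReal_max (-q), ← ENNReal.ofReal_add (le_max_right _ _) (le_max_right _ _),
    ← ENNReal.ofReal_add (by positivity) (le_max_right _ _),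
    ← ENNReal.ofReal_add (le_max_right _ _) (le_max_right _ _),
    ← ENNReal.ofReal_add (by positivity) (le_max_right _ _)]
  apply ENNReal.ofReal_le_ofReal
  have e1 := max_zero_sub_eq_self p
  have e2 := max_zero_sub_eq_self q
  have e3 := max_zero_sub_eq_self r
  linarith

/-- pointwise combination inequality transferred to positive/negative parts -/
lemma pointwise_parts {s u : ℝ} (hs : 0 < s) (hu : 0 < u) {a b d : EReal}
    (ha : a ≠ ⊤) (hb : b ≠ ⊤) (hd : d ≠ ⊤)
    (h : (s : EReal) * a + (u : EReal) * b ≤ d) :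
    ENNReal.ofReal s * erealToENNReal a + ENNReal.ofReal u * erealToENNReal b +
        erealToENNReal (-d) ≤
      erealToENNReal d + ENNReal.ofReal s * erealToENNReal (-a) +
        ENNReal.ofReal u * erealToENNReal (-b) := by
  by_cases hab : a = ⊥
  · have h1 : ENNReal.ofReal s * erealToENNReal (-a) = ⊤ := by
      rw [hab]; simp [erealToENNReal_top, ENNReal.mul_top, ENNReal.ofReal_eq_zero, not_le.2 hs]
    rw [h1]
    simp
  by_cases hbb : b = ⊥
  · have h1 : ENNReal.ofReal u * erealToENNReal (-b) = ⊤ := by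
      rw [hbb]; simp [erealToENNReal_top, ENNReal.mul_top, ENNReal.ofReal_eq_zero, not_le.2 hu]
    rw [h1]
    simp
  lift a to ℝ using ⟨ha, hab⟩
  lift b to ℝ using ⟨hb, hbb⟩
  have hdb : d ≠ ⊥ := by
    intro hdb
    rw [hdb, le_bot_iff, ← EReal.coe_mul, ← EReal.coe_mul, ← EReal.coe_add] at h
    exact EReal.coe_ne_bot _ h
  lift d to ℝ using ⟨hd, hdb⟩
  rw [← EReal.coe_mul, ← EReal.coe_mul, ← EReal.coe_add, EReal.coe_le_coe_iff] at h
  rw [← EReal.coe_neg, ← EReal.coe_neg, ← EReal.coe_neg,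
    erealToENNReal_coe, erealToENNReal_coe, erealToENNReal_coe,
    erealToENNReal_coe, erealToENNReal_coe, erealToENNReal_coe,
    ← ENNReal.ofReal_mul hs.le, ← ENNReal.ofReal_mul hu.le,
    ← ENNReal.ofReal_mul hs.le, ← ENNReal.ofReal_mul hu.le,
    mul_neg, mul_neg]
  exact ofReal_triple_ineq h

end HSAux
namespace HSAux

open MeasureTheory
open scoped ENNReal

lemma coe_ennreal_eq_coe_toReal {Q : ℝ≥0∞} (hQ : Q ≠ ⊤) :
    (Q : EReal) = ((Q.toReal : ℝ) : EReal) := by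
  rw [← EReal.coe_toReal (x := (Q : EReal)) (by simpa [EReal.coe_ennreal_eq_top_iff])
    (EReal.coe_ennreal_ne_bot _), EReal.toReal_coe_ennreal]

lemma ereal_sub_combo {s u : ℝ} (hs : 0 < s) (hu : 0 < u)
    {P₁ P₂ P N₁ N₂ N : ℝ≥0∞} (hP₁ : P₁ ≠ ⊤) (hP₂ : P₂ ≠ ⊤) (hP : P ≠ ⊤)
    (h : ENNReal.ofReal s * P₁ + ENNReal.ofReal u * P₂ + N ≤
      P + ENNReal.ofReal s * N₁ + ENNReal.ofReal u * N₂) :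
    (s : EReal) * ((P₁ : EReal) - (N₁ : EReal)) + (u : EReal) * ((P₂ : EReal) - (N₂ : EReal)) ≤
      (P : EReal) - (N : EReal) := by
  by_cases hN₁ : N₁ = ⊤
  · rw [hN₁, EReal.coe_ennreal_top, EReal.sub_top, EReal.coe_mul_bot_of_pos hs, EReal.bot_add]
    exact bot_le
  by_cases hN₂ : N₂ = ⊤
  · rw [hN₂, EReal.coe_ennreal_top, EReal.sub_top, EReal.coe_mul_bot_of_pos hu, EReal.add_bot]
    exact bot_le
  by_cases hN : N = ⊤
  · exfalso
    have htop : P + ENNReal.ofReal s * N₁ + ENNReal.ofReal u * N₂ = ⊤ :=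
      top_le_iff.1 (le_trans (by rw [hN]; simp) h)
    exact (ENNReal.add_ne_top.2 ⟨ENNReal.add_ne_top.2 ⟨hP,
      ENNReal.mul_ne_top ENNReal.ofReal_ne_top hN₁⟩,
      ENNReal.mul_ne_top ENNReal.ofReal_ne_top hN₂⟩) htop
  -- all finite
  have h' := ENNReal.toReal_mono (ENNReal.add_ne_top.2 ⟨ENNReal.add_ne_top.2 ⟨hP,
      ENNReal.mul_ne_top ENNReal.ofReal_ne_top hN₁⟩,
      ENNReal.mul_ne_top ENNReal.ofReal_ne_top hN₂⟩) h
  rw [ENNReal.toReal_add (ENNReal.add_ne_top.2 ⟨ENNReal.mul_ne_top ENNReal.ofReal_ne_top hP₁,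
      ENNReal.mul_ne_top ENNReal.ofReal_ne_top hP₂⟩) hN,
    ENNReal.toReal_add (ENNReal.mul_ne_top ENNReal.ofReal_ne_top hP₁)
      (ENNReal.mul_ne_top ENNReal.ofReal_ne_top hP₂),
    ENNReal.toReal_add (ENNReal.add_ne_top.2 ⟨hP,
      ENNReal.mul_ne_top ENNReal.ofReal_ne_top hN₁⟩)
      (ENNReal.mul_ne_top ENNReal.ofReal_ne_top hN₂),
    ENNReal.toReal_add hP (ENNReal.mul_ne_top ENNReal.ofReal_ne_top hN₁),
    ENNReal.toReal_mul, ENNReal.toReal_mul, ENNReal.toReal_mul, ENNReal.toReal_mul,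
    ENNReal.toReal_ofReal hs.le, ENNReal.toReal_ofReal hu.le] at h'
  rw [coe_ennreal_eq_coe_toReal hP₁, coe_ennreal_eq_coe_toReal hP₂, coe_ennreal_eq_coe_toReal hP,
    coe_ennreal_eq_coe_toReal hN₁, coe_ennreal_eq_coe_toReal hN₂, coe_ennreal_eq_coe_toReal hN,
    ← EReal.coe_sub, ← EReal.coe_sub, ← EReal.coe_sub, ← EReal.coe_mul, ← EReal.coe_mul,
    ← EReal.coe_add, EReal.coe_le_coe_iff]
  linarith

/-- the main integrated concavity inequality -/
lemma eIntegral_combo_le (μ : Measure ℝ) {s u : ℝ} (hs : 0 < s) (hu : 0 < u)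
    {f₁ f₂ f : ℝ → EReal}
    (hf₁t : ∀ x, f₁ x ≠ ⊤) (hf₂t : ∀ x, f₂ x ≠ ⊤) (hft : ∀ x, f x ≠ ⊤)
    (hm₁p : Measurable fun x => erealToENNReal (f₁ x))
    (hm₂p : Measurable fun x => erealToENNReal (f₂ x))
    (hm₁n : Measurable fun x => erealToENNReal (-f₁ x))
    (hm₂n : Measurable fun x => erealToENNReal (-f₂ x))
    (hmn : Measurable fun x => erealToENNReal (-f x))
    (hP₁ : ∫⁻ x, erealToENNReal (f₁ x) ∂μ ≠ ⊤)
    (hP₂ : ∫⁻ x, erealToENNReal (f₂ x) ∂μ ≠ ⊤)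
    (hP : ∫⁻ x, erealToENNReal (f x) ∂μ ≠ ⊤)
    (hpt : ∀ x, (s : EReal) * f₁ x + (u : EReal) * f₂ x ≤ f x) :
    (s : EReal) * eIntegral μ f₁ + (u : EReal) * eIntegral μ f₂ ≤ eIntegral μ f := by
  unfold eIntegral
  apply ereal_sub_combo hs hu hP₁ hP₂ hP
  have key : ∫⁻ x, (ENNReal.ofReal s * erealToENNReal (f₁ x) +
        ENNReal.ofReal u * erealToENNReal (f₂ x) + erealToENNReal (-f x)) ∂μ ≤
      ∫⁻ x, (erealToENNReal (f x) + ENNReal.ofReal s * erealToENNReal (-f₁ x) +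
        ENNReal.ofReal u * erealToENNReal (-f₂ x)) ∂μ :=
    lintegral_mono fun x => pointwise_parts hs hu (hf₁t x) (hf₂t x) (hft x) (hpt x)
  rw [lintegral_add_left (f := fun x => ENNReal.ofReal s * erealToENNReal (f₁ x) +
      ENNReal.ofReal u * erealToENNReal (f₂ x)) ((hm₁p.const_mul _).add (hm₂p.const_mul _)) _,
    lintegral_add_left (hm₁p.const_mul _) _,
    lintegral_add_right _ (hm₂n.const_mul _),
    lintegral_add_right _ (hm₁n.const_mul _),
    lintegral_const_mul' _ _ ENNReal.ofReal_ne_top,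
    lintegral_const_mul' _ _ ENNReal.ofReal_ne_top,
    lintegral_const_mul' _ _ ENNReal.ofReal_ne_top,
    lintegral_const_mul' _ _ ENNReal.ofReal_ne_top] at key
  exact key

end HSAux
namespace HSAux

open MeasureTheory
open scoped ENNReal

lemma mul_ennreal_sub {a : ℝ} (ha : 0 < a) (P N : ℝ≥0∞) :
    (a : EReal) * ((P : EReal) - (N : EReal)) =
      ((ENNReal.ofReal a * P : ℝ≥0∞) : EReal) - ((ENNReal.ofReal a * N : ℝ≥0∞) : EReal) := by
  have hoa : ENNReal.ofReal a ≠ 0 := by simp [ENNReal.ofReal_eq_zero, not_le.2 ha]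
  by_cases hN : N = ⊤
  · rw [hN, EReal.coe_ennreal_top, EReal.sub_top, EReal.coe_mul_bot_of_pos ha,
      ENNReal.mul_top hoa, EReal.coe_ennreal_top, EReal.sub_top]
  by_cases hP : P = ⊤
  · rw [hP, ENNReal.mul_top hoa, EReal.coe_ennreal_top]
    rw [coe_ennreal_eq_coe_toReal hN, coe_ennreal_eq_coe_toReal (ENNReal.mul_ne_top
      ENNReal.ofReal_ne_top hN), EReal.top_sub_coe, EReal.top_sub_coe,
      EReal.coe_mul_top_of_pos ha]
  · rw [coe_ennreal_eq_coe_toReal hN, coe_ennreal_eq_coe_toReal hP,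
      coe_ennreal_eq_coe_toReal (ENNReal.mul_ne_top ENNReal.ofReal_ne_top hN),
      coe_ennreal_eq_coe_toReal (ENNReal.mul_ne_top ENNReal.ofReal_ne_top hP),
      ENNReal.toReal_mul, ENNReal.toReal_mul, ENNReal.toReal_ofReal ha.le,
      ← EReal.coe_sub, ← EReal.coe_sub, ← EReal.coe_mul]
    norm_cast
    ring

lemma mul_eIntegral (μ : Measure ℝ) {a : ℝ} (ha : 0 < a) (f : ℝ → EReal) :
    (a : EReal) * eIntegral μ f = eIntegral μ (fun x => (a : EReal) * f x) := by
  unfold eIntegral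
  have h1 : ∀ x, erealToENNReal ((a : EReal) * f x) = ENNReal.ofReal a * erealToENNReal (f x) :=
    fun x => erealToENNReal_mul ha _
  have h2 : ∀ x, erealToENNReal (-((a : EReal) * f x)) =
      ENNReal.ofReal a * erealToENNReal (-f x) := by
    intro x
    rw [← mul_neg, erealToENNReal_mul ha]
  simp only [h1, h2]
  rw [lintegral_const_mul' _ _ ENNReal.ofReal_ne_top,
    lintegral_const_mul' _ _ ENNReal.ofReal_ne_top]
  exact mul_ennreal_sub ha _ _

lemma mul_iInf {ι : Sort*} [Nonempty ι] {a : ℝ} (ha : 0 < a) (F : ι → EReal) :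
    (a : EReal) * (⨅ i, F i) = ⨅ i, (a : EReal) * F i := by
  have hmono : ∀ (b : ℝ), 0 < b → ∀ (x y : EReal), x ≤ y → (b : EReal) * x ≤ (b : EReal) * y := by
    intro b hb x y h
    exact mul_le_mul_of_nonneg_left h (by exact_mod_cast hb.le)
  apply le_antisymm
  · exact le_iInf fun i => hmono a ha _ _ (iInf_le F i)
  · have h1 : ((a⁻¹ : ℝ) : EReal) * (⨅ i, (a : EReal) * F i) ≤ ⨅ i, F i := by
      apply le_iInf fun i => ?_
      calc ((a⁻¹ : ℝ) : EReal) * (⨅ i, (a : EReal) * F i) ≤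
          ((a⁻¹ : ℝ) : EReal) * ((a : EReal) * F i) :=
            hmono _ (by positivity) _ _ (iInf_le _ i)
        _ = F i := by
            rw [show ((a⁻¹:ℝ):EReal) * ((a:EReal) * F i) = (a:EReal) * (((a⁻¹:ℝ):EReal) * F i) by
              rw [← mul_assoc, ← mul_assoc, ← EReal.coe_mul, ← EReal.coe_mul, mul_comm a⁻¹ a]]
            exact mul_inv_cancel_mul ha _
    calc (⨅ i, (a : EReal) * F i) =
        (a : EReal) * (((a⁻¹ : ℝ) : EReal) * (⨅ i, (a : EReal) * F i)) :=
          (mul_inv_cancel_mul ha _).symm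
      _ ≤ (a : EReal) * (⨅ i, F i) := hmono a ha _ _ h1

end HSAux
namespace HSAux

open MeasureTheory
open scoped ENNReal

lemma eIntegral_zero (μ : Measure ℝ) : eIntegral μ (fun _ => (0 : EReal)) = 0 := by
  unfold eIntegral
  simp only [neg_zero, erealToENNReal_zero, lintegral_zero]
  simp

instance : Nonempty {y : ℝ // 0 < y} := ⟨⟨1, one_pos⟩⟩

lemma gc_eq (μ : Measure ℝ) {c : ℝ} (hc : c ∈ Set.Icc (0:ℝ) 1) :
    (c : EReal) * elog (hsBary c μ) =
      ⨅ y : {y : ℝ // 0 < y}, eIntegral μ (fun x => psi c y x) := by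
  rcases eq_or_lt_of_le hc.1 with h0 | h0
  · rw [← h0]
    rw [show ((0:ℝ) : EReal) = 0 from rfl, zero_mul]
    have : ∀ y : {y : ℝ // 0 < y}, eIntegral μ (fun x => psi 0 y x) = 0 := by
      intro y
      rw [show (fun x => psi 0 (y:ℝ) x) = fun _ => (0 : EReal) from funext fun x => psi_zero _ _]
      exact eIntegral_zero μ
    simp only [this, iInf_const]
  · rw [hsBary, elog_eexp, mul_iInf h0]
    congr 1
    funext y
    rw [mul_eIntegral μ h0]
    congr 1
    funext x
    exact psi_eq_mul_kernel h0 _ _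

end HSAux

open HSAux

/-- for `μ ≠ δ₀`, the function `c ↦ c·log [μ]_c` is concave on `[0,1]`. -/
theorem hsBary_logConcave_parameter (μ : Measure ℝ) [IsProbabilityMeasure μ]
    (hsupp : μ (Set.Iio 0) = 0) (hint : Integrable (fun x => Real.log (1 + x)) μ)
    (hne : μ ≠ MeasureTheory.Measure.dirac 0) :
    ∀ c₁ ∈ Set.Icc (0 : ℝ) 1, ∀ c₂ ∈ Set.Icc (0 : ℝ) 1, ∀ t ∈ Set.Icc (0 : ℝ) 1,
      (((1 - t : ℝ)) : EReal) * (((c₁ : ℝ) : EReal) * elog (hsBary c₁ μ)) +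
          ((t : ℝ) : EReal) * (((c₂ : ℝ) : EReal) * elog (hsBary c₂ μ)) ≤
        ((((1 - t) * c₁ + t * c₂ : ℝ)) : EReal) *
          elog (hsBary ((1 - t) * c₁ + t * c₂) μ) := by
  intro c₁ hc₁ c₂ hc₂ t ht
  rcases eq_or_lt_of_le ht.1 with ht0 | ht0
  · -- t = 0
    rw [← ht0]
    norm_num
  rcases eq_or_lt_of_le ht.2 with ht1 | ht1
  · -- t = 1
    rw [ht1]
    norm_num
  -- 0 < t < 1
  have hs : (0:ℝ) < 1 - t := by linarith
  have hc : (1 - t) * c₁ + t * c₂ ∈ Set.Icc (0:ℝ) 1 := by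
    constructor
    · nlinarith [hc₁.1, hc₂.1]
    · nlinarith [hc₁.2, hc₂.2]
  rw [gc_eq μ hc₁, gc_eq μ hc₂, gc_eq μ hc]
  apply le_iInf
  intro y
  have hy : (0:ℝ) < (y : ℝ) := y.2
  calc ((1 - t : ℝ) : EReal) * (⨅ z : {y : ℝ // 0 < y}, eIntegral μ (fun x => psi c₁ z x)) +
        ((t : ℝ) : EReal) * (⨅ z : {y : ℝ // 0 < y}, eIntegral μ (fun x => psi c₂ z x)) ≤
      ((1 - t : ℝ) : EReal) * eIntegral μ (fun x => psi c₁ y x) +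
        ((t : ℝ) : EReal) * eIntegral μ (fun x => psi c₂ y x) := by
        apply add_le_add
        · exact mul_le_mul_of_nonneg_left (iInf_le _ y) (by exact_mod_cast hs.le)
        · exact mul_le_mul_of_nonneg_left (iInf_le _ y) (by exact_mod_cast ht0.le)
    _ ≤ eIntegral μ (fun x => psi ((1 - t) * c₁ + t * c₂) y x) := by
        apply eIntegral_combo_le μ hs ht0 (fun x => psi_ne_top _ _ _) (fun x => psi_ne_top _ _ _)
          (fun x => psi_ne_top _ _ _) (measurable_pos_part _ _) (measurable_pos_part _ _)
          (measurable_neg_part _ _) (measurable_neg_part _ _) (measurable_neg_part _ _)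
          (lintegral_pos_part_lt_top μ hsupp hint hc₁.1 hc₁.2 hy).ne
          (lintegral_pos_part_lt_top μ hsupp hint hc₂.1 hc₂.2 hy).ne
          (lintegral_pos_part_lt_top μ hsupp hint hc.1 hc.2 hy).ne
        exact fun x => psi_combo hs ht0 (by ring) c₁ c₂ (y : ℝ) x
end
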